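/- Let λ ∈ [0,1] and θ₁, θ₂, θ₃ ∈ [0,1). For signs s₂, s₃ ∈ {−1, +1}, write N(s₂,s₃) = θ₁ + s₂θ₂ + s₃θ₃ + s₂s₃·θ₁θ₂θ₃ and D(s₂,s₃) = 1 + λ·( s₂θ₁θ₂ + s₂s₃θ₂θ₃ + s₃θ₃θ₁ ). Then (1/4)·Σ_{s₂,s₃ ∈ {−1,+1}} N(s₂,s₃)·artanh( λ·N(s₂,s₃) / D(s₂,s₃) ) ≤ λ·( θ₁·artanh(θ₁) + θ₂·artanh(θ₂) + θ₃·artanh(θ₃) ). -/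

import Mathlib

/-- The real inverse hyperbolic tangent, `artanh x = ½ · log((1+x)/(1−x))`. -/
noncomputable def artanh (x : ℝ) : ℝ := (1 / 2) * Real.log ((1 + x) / (1 - x))

/-- Numerator `N(s₂,s₃) = θ₁ + s₂θ₂ + s₃θ₃ + s₂s₃·θ₁θ₂θ₃`. -/
def N (θ₁ θ₂ θ₃ s₂ s₃ : ℝ) : ℝ := θ₁ + s₂ * θ₂ + s₃ * θ₃ + s₂ * s₃ * (θ₁ * θ₂ * θ₃)

/-- Denominator `D(s₂,s₃) = 1 + λ·(s₂θ₁θ₂ + s₂s₃θ₂θ₃ + s₃θ₃θ₁)`. -/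
def D (lam θ₁ θ₂ θ₃ s₂ s₃ : ℝ) : ℝ :=
  1 + lam * (s₂ * (θ₁ * θ₂) + s₂ * s₃ * (θ₂ * θ₃) + s₃ * (θ₃ * θ₁))



lemma artanh_zero : artanh 0 = 0 := by simp [artanh]

lemma artanh_neg (x : ℝ) : artanh (-x) = - artanh x := by
  unfold artanh
  rw [show (1 : ℝ) + -x = 1 - x by ring, show (1 : ℝ) - -x = 1 + x by ring,
    show (1 - x) / (1 + x) = ((1 + x) / (1 - x))⁻¹ by rw [inv_div], Real.log_inv]
  ring

lemma artanh_eq {x : ℝ} (h1 : -1 < x) (h2 : x < 1) :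
    artanh x = (1 / 2) * (Real.log (1 + x) - Real.log (1 - x)) := by
  unfold artanh
  rw [Real.log_div (by linarith) (by linarith)]

lemma hasDerivAt_artanh {x : ℝ} (h1 : -1 < x) (h2 : x < 1) :
    HasDerivAt artanh (1 / (1 - x ^ 2)) x := by
  have hx1 : (0 : ℝ) < 1 + x := by linarith
  have hx2 : (0 : ℝ) < 1 - x := by linarith
  have hd : HasDerivAt (fun y : ℝ => (1 + y) / (1 - y))
      ((1 * (1 - x) - (1 + x) * (-1)) / (1 - x) ^ 2) x := by
    exact (((hasDerivAt_id x).const_add 1).div ((hasDerivAt_id x).neg.const_add 1) hx2.ne')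
  have hlog := (hd.log (by positivity)).const_mul ((1 : ℝ) / 2)
  have hsq : (1 : ℝ) - x ^ 2 ≠ 0 := by nlinarith
  refine hlog.congr_deriv ?_
  field_simp
  ring

lemma continuousAt_artanh {x : ℝ} (h1 : -1 < x) (h2 : x < 1) : ContinuousAt artanh x :=
  (hasDerivAt_artanh h1 h2).continuousAt

lemma artanh_ge_cube {u : ℝ} (h0 : 0 ≤ u) (h1 : u < 1) : u + u ^ 3 / 3 ≤ artanh u := by
  have key : MonotoneOn (fun y : ℝ => artanh y - (y + y ^ 3 / 3)) (Set.Icc 0 u) := by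
    apply monotoneOn_of_hasDerivWithinAt_nonneg (f' := fun y => 1 / (1 - y ^ 2) - (1 + y ^ 2))
      (convex_Icc 0 u)
    · intro y hy
      exact ((continuousAt_artanh (by cases hy; linarith) (by cases hy; linarith)).sub
        (by fun_prop)).continuousWithinAt
    · intro y hy
      rw [interior_Icc] at hy
      obtain ⟨hy0, hyu⟩ := hy
      have hder := (hasDerivAt_artanh (by linarith : (-1:ℝ) < y) (by linarith : y < 1)).sub
        ((hasDerivAt_id y).add ((hasDerivAt_pow 3 y).div_const 3))
      have : HasDerivAt (fun y : ℝ => artanh y - (y + y ^ 3 / 3)) (1 / (1 - y ^ 2) - (1 + y ^ 2)) y := by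
        exact hder.congr_deriv (by norm_num)
      exact this.hasDerivWithinAt
    · intro y hy
      rw [interior_Icc] at hy
      obtain ⟨hy0, hyu⟩ := hy
      have h2 : (0 : ℝ) < 1 - y ^ 2 := by nlinarith
      rw [sub_nonneg, le_div_iff₀ h2]
      nlinarith
  have := key (Set.left_mem_Icc.2 h0) (Set.right_mem_Icc.2 h0) h0
  simp [artanh_zero] at this
  linarith

lemma artanh_nonneg {u : ℝ} (h0 : 0 ≤ u) (h1 : u < 1) : 0 ≤ artanh u := by
  have := artanh_ge_cube h0 h1
  nlinarith [pow_nonneg h0 3]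

lemma artanh_ge_self {u : ℝ} (h0 : 0 ≤ u) (h1 : u < 1) : u ≤ artanh u := by
  have := artanh_ge_cube h0 h1
  nlinarith [pow_nonneg h0 3]

lemma artanh_sub_mono {a b : ℝ} (h0 : 0 ≤ a) (hab : a ≤ b) (hb : b < 1) :
    artanh a - a ≤ artanh b - b := by
  have key : MonotoneOn (fun y : ℝ => artanh y - y) (Set.Icc a b) := by
    apply monotoneOn_of_hasDerivWithinAt_nonneg (f' := fun y => 1 / (1 - y ^ 2) - 1)
      (convex_Icc a b)
    · intro y hy
      exact ((continuousAt_artanh (by cases hy; linarith) (by cases hy; linarith)).sub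
        (by fun_prop)).continuousWithinAt
    · intro y hy
      rw [interior_Icc] at hy
      obtain ⟨hy0, hyb⟩ := hy
      exact ((hasDerivAt_artanh (by linarith) (by linarith)).sub (hasDerivAt_id y)).hasDerivWithinAt
    · intro y hy
      rw [interior_Icc] at hy
      obtain ⟨hy0, hyb⟩ := hy
      have h2 : (0 : ℝ) < 1 - y ^ 2 := by nlinarith
      rw [sub_nonneg, le_div_iff₀ h2]
      nlinarith
  simpa using key (Set.left_mem_Icc.2 hab) (Set.right_mem_Icc.2 hab) hab

/-- all nonneg case -/
lemma helperA {u₁ u₂ u₃ : ℝ} (h1 : 0 ≤ u₁) (h1' : u₁ < 1) (h2 : 0 ≤ u₂) (h2' : u₂ < 1)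
    (h3 : 0 ≤ u₃) (h3' : u₃ < 1) :
    u₁ + u₂ + u₃ + u₁ * u₂ * u₃ ≤ artanh u₁ + artanh u₂ + artanh u₃ := by
  have a1 := artanh_ge_cube h1 h1'
  have a2 := artanh_ge_cube h2 h2'
  have a3 := artanh_ge_cube h3 h3'
  have amgm : u₁ * u₂ * u₃ ≤ u₁ ^ 3 / 3 + u₂ ^ 3 / 3 + u₃ ^ 3 / 3 := by
    nlinarith [sq_nonneg (u₁ - u₂), sq_nonneg (u₂ - u₃), sq_nonneg (u₃ - u₁),
      mul_nonneg h1 h2, mul_nonneg h2 h3, mul_nonneg h3 h1]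
  linarith

/-- one negative (written with v = -u₃ ≥ 0) -/
lemma helperB {a b v : ℝ} (ha : 0 ≤ a) (ha' : a < 1) (hb : 0 ≤ b) (hb' : b < 1)
    (hv : 0 ≤ v) (hv' : v < 1)
    (hσ : 0 ≤ a * b - v * (a + b)) (hN : 0 ≤ a + b - v - a * b * v) :
    a + b - v - a * b * v ≤ artanh a + artanh b - artanh v := by
  rcases le_or_gt v a with hva | hva
  · have m1 := artanh_sub_mono hv hva ha'
    have m2 := artanh_ge_self hb hb'
    have m3 : 0 ≤ a * b * v := by positivity
    linarith
  · rcases le_or_gt v b with hvb | hvb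
    · have m1 := artanh_sub_mono hv hvb hb'
      have m2 := artanh_ge_self ha ha'
      have m3 : 0 ≤ a * b * v := by positivity
      linarith
    · exfalso
      have e1 : v * a ≥ b * a := by nlinarith
      have e2 : v * b ≥ a * b := by nlinarith
      have hab : a * b ≤ 0 := by nlinarith
      have hab0 : a * b = 0 := le_antisymm hab (by positivity)
      have hvpos : 0 < v := lt_of_le_of_lt ha hva
      have hsum : a + b ≤ 0 := by nlinarith
      have : a = 0 ∧ b = 0 := ⟨by linarith, by linarith⟩
      obtain ⟨rfl, rfl⟩ := this
      nlinarith
/-- two negatives -/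
lemma helperC {a v₂ v₃ : ℝ} (ha : 0 ≤ a) (ha' : a < 1) (h2 : 0 ≤ v₂) (h2' : v₂ < 1)
    (h3 : 0 ≤ v₃) (h3' : v₃ < 1)
    (hσ : 0 ≤ v₂ * v₃ - a * (v₂ + v₃)) (hN : 0 ≤ a - v₂ - v₃ + a * v₂ * v₃) :
    a - v₂ - v₃ + a * v₂ * v₃ ≤ artanh a - artanh v₂ - artanh v₃ := by
  have hprod : v₂ * v₃ = 0 := by
    have key : v₂ * v₃ * (v₂ * v₃ - 3) ≥ 0 := by
      nlinarith [sq_nonneg (v₂ - v₃), sq_nonneg (v₂ + v₃), mul_nonneg (mul_nonneg h2 h3) (mul_nonneg h2 h3),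
        mul_nonneg h2 h3]
    nlinarith [mul_nonneg h2 h3, mul_le_one₀ h2'.le h3 h3'.le]
  have hzero : v₂ = 0 ∧ v₃ = 0 := by
    constructor <;> nlinarith [mul_nonneg h2 h3, mul_nonneg ha (add_nonneg h2 h3)]
  obtain ⟨rfl, rfl⟩ := hzero
  simp [artanh_zero]
  exact artanh_ge_self ha ha'

lemma claimstar {u₁ u₂ u₃ : ℝ} (h1 : -1 < u₁) (h1' : u₁ < 1) (h2 : -1 < u₂) (h2' : u₂ < 1)
    (h3 : -1 < u₃) (h3' : u₃ < 1)
    (hσ : 0 ≤ u₁ * u₂ + u₂ * u₃ + u₃ * u₁)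
    (hN : 0 ≤ u₁ + u₂ + u₃ + u₁ * u₂ * u₃) :
    u₁ + u₂ + u₃ + u₁ * u₂ * u₃ ≤ artanh u₁ + artanh u₂ + artanh u₃ := by
  rcases le_or_gt 0 u₁ with p1 | p1 <;> rcases le_or_gt 0 u₂ with p2 | p2 <;>
    rcases le_or_gt 0 u₃ with p3 | p3
  · exact helperA p1 h1' p2 h2' p3 h3'
  · -- u₃ < 0
    have h := helperB p1 h1' p2 h2' (by linarith : (0:ℝ) ≤ -u₃) (by linarith : -u₃ < 1)
      (by nlinarith) (by nlinarith)
    have e := artanh_neg u₃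
    have hpoly : u₁ + u₂ + u₃ + u₁ * u₂ * u₃ = u₁ + u₂ - -u₃ - u₁ * u₂ * -u₃ := by ring
    rw [hpoly]
    rw [show artanh (-u₃) = - artanh u₃ from artanh_neg u₃] at h
    linarith
  · -- u₂ < 0
    have h := helperB p1 h1' p3 h3' (by linarith : (0:ℝ) ≤ -u₂) (by linarith : -u₂ < 1)
      (by nlinarith) (by nlinarith)
    rw [show artanh (-u₂) = - artanh u₂ from artanh_neg u₂] at h
    have hpoly : u₁ + u₂ + u₃ + u₁ * u₂ * u₃ = u₁ + u₃ - -u₂ - u₁ * u₃ * -u₂ := by ring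
    rw [hpoly]
    linarith
  · -- u₂ < 0, u₃ < 0
    have h := helperC p1 h1' (by linarith : (0:ℝ) ≤ -u₂) (by linarith : -u₂ < 1)
      (by linarith : (0:ℝ) ≤ -u₃) (by linarith : -u₃ < 1) (by nlinarith) (by nlinarith)
    rw [show artanh (-u₂) = - artanh u₂ from artanh_neg u₂,
      show artanh (-u₃) = - artanh u₃ from artanh_neg u₃] at h
    have hpoly : u₁ + u₂ + u₃ + u₁ * u₂ * u₃ = u₁ - -u₂ - -u₃ + u₁ * -u₂ * -u₃ := by ring
    rw [hpoly]
    linarith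
  · -- u₁ < 0
    have h := helperB p2 h2' p3 h3' (by linarith : (0:ℝ) ≤ -u₁) (by linarith : -u₁ < 1)
      (by nlinarith) (by nlinarith)
    rw [show artanh (-u₁) = - artanh u₁ from artanh_neg u₁] at h
    have hpoly : u₁ + u₂ + u₃ + u₁ * u₂ * u₃ = u₂ + u₃ - -u₁ - u₂ * u₃ * -u₁ := by ring
    rw [hpoly]
    linarith
  · -- u₁ < 0, u₃ < 0
    have h := helperC p2 h2' (by linarith : (0:ℝ) ≤ -u₁) (by linarith : -u₁ < 1)
      (by linarith : (0:ℝ) ≤ -u₃) (by linarith : -u₃ < 1) (by nlinarith) (by nlinarith)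
    rw [show artanh (-u₁) = - artanh u₁ from artanh_neg u₁,
      show artanh (-u₃) = - artanh u₃ from artanh_neg u₃] at h
    have hpoly : u₁ + u₂ + u₃ + u₁ * u₂ * u₃ = u₂ - -u₁ - -u₃ + u₂ * -u₁ * -u₃ := by ring
    rw [hpoly]
    linarith
  · -- u₁ < 0, u₂ < 0
    have h := helperC p3 h3' (by linarith : (0:ℝ) ≤ -u₁) (by linarith : -u₁ < 1)
      (by linarith : (0:ℝ) ≤ -u₂) (by linarith : -u₂ < 1) (by nlinarith) (by nlinarith)
    rw [show artanh (-u₁) = - artanh u₁ from artanh_neg u₁,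
      show artanh (-u₂) = - artanh u₂ from artanh_neg u₂] at h
    have hpoly : u₁ + u₂ + u₃ + u₁ * u₂ * u₃ = u₃ - -u₁ - -u₂ + u₃ * -u₁ * -u₂ := by ring
    rw [hpoly]
    linarith
  · -- all negative
    exfalso
    have hp : 0 ≤ u₁ * u₂ := mul_nonneg_of_nonpos_of_nonpos p1.le p2.le
    have hq : u₁ * u₂ * u₃ ≤ 0 := mul_nonpos_of_nonneg_of_nonpos hp p3.le
    linarith

noncomputable def Fk (P Q x : ℝ) : ℝ :=
  x * (Real.log P - Real.log Q) - Real.log (1 + x * (P - 1)) + Real.log (1 + x * (Q - 1))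

noncomputable def F1k (P Q x : ℝ) : ℝ :=
  (Real.log P - Real.log Q) - (P - 1) / (1 + x * (P - 1)) + (Q - 1) / (1 + x * (Q - 1))

noncomputable def F2k (P Q x : ℝ) : ℝ :=
  (P - 1) ^ 2 / (1 + x * (P - 1)) ^ 2 - (Q - 1) ^ 2 / (1 + x * (Q - 1)) ^ 2

def Gk (P Q x : ℝ) : ℝ := (P + Q - 2) + x * (2 * (P * Q - P - Q + 1))

lemma affpos {R : ℝ} (hR : 0 < R) {x : ℝ} (hx : 0 ≤ x) (hx1 : x ≤ 1) :
    0 < 1 + x * (R - 1) := by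
  rcases le_total R 1 with h | h
  · nlinarith
  · nlinarith

lemma Fk_zero (P Q : ℝ) : Fk P Q 0 = 0 := by simp [Fk]

lemma Fk_one (P Q : ℝ) : Fk P Q 1 = 0 := by
  unfold Fk
  rw [show (1 : ℝ) + 1 * (P - 1) = P by ring, show (1 : ℝ) + 1 * (Q - 1) = Q by ring]
  ring

lemma Fk_deriv {P Q : ℝ} (hP : 0 < P) (hQ : 0 < Q) {x : ℝ} (hx0 : 0 ≤ x) (hx1 : x ≤ 1) :
    HasDerivAt (Fk P Q) (F1k P Q x) x := by
  have hA := affpos hP hx0 hx1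
  have hB := affpos hQ hx0 hx1
  have dA : HasDerivAt (fun y : ℝ => 1 + y * (P - 1)) (P - 1) x := by
    simpa using ((hasDerivAt_id x).mul_const (P - 1)).const_add 1
  have dB : HasDerivAt (fun y : ℝ => 1 + y * (Q - 1)) (Q - 1) x := by
    simpa using ((hasDerivAt_id x).mul_const (Q - 1)).const_add 1
  have l1 := dA.log hA.ne'
  have l2 := dB.log hB.ne'
  have lin : HasDerivAt (fun y : ℝ => y * (Real.log P - Real.log Q))
      (Real.log P - Real.log Q) x := by
    simpa using (hasDerivAt_id x).mul_const (Real.log P - Real.log Q)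
  exact (lin.sub l1).add l2

lemma F1k_deriv {P Q : ℝ} (hP : 0 < P) (hQ : 0 < Q) {x : ℝ} (hx0 : 0 ≤ x) (hx1 : x ≤ 1) :
    HasDerivAt (F1k P Q) (F2k P Q x) x := by
  have hA := affpos hP hx0 hx1
  have hB := affpos hQ hx0 hx1
  have dA : HasDerivAt (fun y : ℝ => 1 + y * (P - 1)) (P - 1) x := by
    simpa using ((hasDerivAt_id x).mul_const (P - 1)).const_add 1
  have dB : HasDerivAt (fun y : ℝ => 1 + y * (Q - 1)) (Q - 1) x := by
    simpa using ((hasDerivAt_id x).mul_const (Q - 1)).const_add 1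
  have q1 := (hasDerivAt_const x (P - 1)).div dA hA.ne'
  have q2 := (hasDerivAt_const x (Q - 1)).div dB hB.ne'
  have hAne := hA.ne'
  have hBne := hB.ne'
  have e : F2k P Q x = 0 -
      (0 * (1 + x * (P - 1)) - (P - 1) * (P - 1)) / (1 + x * (P - 1)) ^ 2 +
      (0 * (1 + x * (Q - 1)) - (Q - 1) * (Q - 1)) / (1 + x * (Q - 1)) ^ 2 := by
    unfold F2k
    field_simp
    ring
  rw [e]
  exact ((hasDerivAt_const x (Real.log P - Real.log Q)).sub q1).add q2

lemma Fk_contOn {P Q : ℝ} (hP : 0 < P) (hQ : 0 < Q) {a b : ℝ} (ha : 0 ≤ a) (hb : b ≤ 1) :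
    ContinuousOn (Fk P Q) (Set.Icc a b) := fun x hx =>
  (Fk_deriv hP hQ (le_trans ha hx.1) (le_trans hx.2 hb)).continuousAt.continuousWithinAt

lemma F1k_nonneg {P Q : ℝ} (hP : 0 < P) (hQ : 0 < Q) (hQP : Q ≤ P)
    (hL : P - Q ≤ Real.log P - Real.log Q) (h2 : 2 ≤ P + Q)
    {x : ℝ} (hx0 : 0 ≤ x) (hx1 : x ≤ 1) (hGx : 0 ≤ Gk P Q x) :
    0 ≤ F1k P Q x := by
  have hA := affpos hP hx0 hx1
  have hB := affpos hQ hx0 hx1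
  unfold Gk at hGx
  have hinner : 0 ≤ (P + Q - 2) + x * ((P - 1) * (Q - 1)) := by nlinarith
  have hAB : 1 ≤ (1 + x * (P - 1)) * (1 + x * (Q - 1)) := by
    nlinarith [mul_nonneg hx0 hinner]
  have hid : (P - 1) / (1 + x * (P - 1)) - (Q - 1) / (1 + x * (Q - 1))
      = (P - Q) / ((1 + x * (P - 1)) * (1 + x * (Q - 1))) := by
    rw [div_sub_div _ _ hA.ne' hB.ne']
    congr 1
    ring
  have hds : (P - Q) / ((1 + x * (P - 1)) * (1 + x * (Q - 1))) ≤ P - Q :=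
    div_le_self (by linarith) hAB
  unfold F1k
  linarith

lemma Gk_between {P Q c d x : ℝ} (hGc : Gk P Q c ≤ 0) (hGd : Gk P Q d ≤ 0)
    (hcx : c ≤ x) (hxd : x ≤ d) : Gk P Q x ≤ 0 := by
  unfold Gk at *
  rcases le_total 0 (2 * (P * Q - P - Q + 1)) with hs | hs
  · nlinarith [mul_nonneg (sub_nonneg.2 hxd) hs]
  · nlinarith [mul_nonneg (sub_nonneg.2 hcx) (neg_nonneg.2 hs)]

lemma Gk_between' {P Q c d x : ℝ} (hGc : 0 ≤ Gk P Q c) (hGd : 0 ≤ Gk P Q d)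
    (hcx : c ≤ x) (hxd : x ≤ d) : 0 ≤ Gk P Q x := by
  unfold Gk at *
  rcases le_total 0 (2 * (P * Q - P - Q + 1)) with hs | hs
  · nlinarith [mul_nonneg (sub_nonneg.2 hcx) hs]
  · nlinarith [mul_nonneg (sub_nonneg.2 hxd) (neg_nonneg.2 hs)]

lemma Fk_mono_part {P Q : ℝ} (hP : 0 < P) (hQ : 0 < Q) (hQP : Q ≤ P)
    (hL : P - Q ≤ Real.log P - Real.log Q) (h2 : 2 ≤ P + Q)
    {c : ℝ} (hc0 : 0 ≤ c) (hc1 : c ≤ 1) (hGc : 0 ≤ Gk P Q c) :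
    0 ≤ Fk P Q c := by
  have hG0 : 0 ≤ Gk P Q 0 := by unfold Gk; linarith
  have mono : MonotoneOn (Fk P Q) (Set.Icc 0 c) := by
    apply monotoneOn_of_hasDerivWithinAt_nonneg (f' := F1k P Q) (convex_Icc 0 c)
    · exact Fk_contOn hP hQ le_rfl hc1
    · intro x hx
      rw [interior_Icc] at hx
      exact (Fk_deriv hP hQ hx.1.le (le_trans hx.2.le hc1)).hasDerivWithinAt
    · intro x hx
      rw [interior_Icc] at hx
      exact F1k_nonneg hP hQ hQP hL h2 hx.1.le (le_trans hx.2.le hc1)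
        (Gk_between' hG0 hGc hx.1.le hx.2.le)
  have := mono (Set.left_mem_Icc.2 hc0) (Set.right_mem_Icc.2 hc0) hc0
  rwa [Fk_zero] at this

lemma F2k_nonpos {P Q : ℝ} (hP : 0 < P) (hQ : 0 < Q) (hQP : Q ≤ P)
    {x : ℝ} (hx0 : 0 ≤ x) (hx1 : x ≤ 1) (hGx : Gk P Q x ≤ 0) :
    F2k P Q x ≤ 0 := by
  have hA := affpos hP hx0 hx1
  have hB := affpos hQ hx0 hx1
  unfold Gk at hGx
  unfold F2k
  rw [sub_nonpos, div_le_div_iff₀ (by positivity) (by positivity)]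
  nlinarith [mul_nonneg (sub_nonneg.2 hQP) (neg_nonneg.2 hGx)]

lemma Fk_concave_part {P Q : ℝ} (hP : 0 < P) (hQ : 0 < Q) (hQP : Q ≤ P)
    {c : ℝ} (hc0 : 0 ≤ c) (hGc : Gk P Q c ≤ 0) (hG1 : Gk P Q 1 ≤ 0) :
    ConcaveOn ℝ (Set.Icc c 1) (Fk P Q) := by
  apply concaveOn_of_hasDerivWithinAt2_nonpos (f' := F1k P Q) (f'' := F2k P Q) (convex_Icc c 1)
  · exact Fk_contOn hP hQ hc0 le_rfl
  · intro x hx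
    rw [interior_Icc] at hx
    exact (Fk_deriv hP hQ (le_trans hc0 hx.1.le) hx.2.le).hasDerivWithinAt
  · intro x hx
    rw [interior_Icc] at hx
    exact (F1k_deriv hP hQ (le_trans hc0 hx.1.le) hx.2.le).hasDerivWithinAt
  · intro x hx
    rw [interior_Icc] at hx
    exact F2k_nonpos hP hQ hQP (le_trans hc0 hx.1.le) hx.2.le
      (Gk_between hGc hG1 hx.1.le hx.2.le)

lemma keyPQ {P Q : ℝ} (hQ : 0 < Q) (hQP : Q ≤ P) (hPQ1 : P * Q ≤ 1)
    (hL : 2 ≤ P + Q → P - Q ≤ Real.log P - Real.log Q)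
    {l : ℝ} (hl0 : 0 ≤ l) (hl1 : l ≤ 1) : 0 ≤ Fk P Q l := by
  have hP : 0 < P := lt_of_lt_of_le hQ hQP
  have hAM : 2 * (P * Q) ≤ P + Q := by
    nlinarith [sq_nonneg (P - Q), mul_pos hP hQ,
      mul_nonneg (mul_pos hP hQ).le (sub_nonneg.2 hPQ1)]
  have hG1 : Gk P Q 1 ≤ 0 := by unfold Gk; linarith
  rcases le_or_gt 0 (Gk P Q l) with hGl | hGl
  · -- monotone case
    have h2 : 2 ≤ P + Q := by
      by_contra hc
      push_neg at hc
      unfold Gk at hGl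
      rcases eq_or_lt_of_le hl1 with rfl | hl1'
      · nlinarith [sq_nonneg (P - Q),
          mul_pos (by linarith : (0:ℝ) < P + Q) (by linarith : (0:ℝ) < 2 - (P + Q))]
      · nlinarith [mul_pos (by linarith : (0:ℝ) < 1 - l) (by linarith : (0:ℝ) < 2 - (P + Q)),
          mul_nonneg hl0 (by linarith : (0:ℝ) ≤ P + Q - 2 * (P * Q))]
    exact Fk_mono_part hP hQ hQP (hL h2) h2 hl0 hl1 hGl
  · rcases le_or_gt (Gk P Q 0) 0 with hG0 | hG0
    · -- concave on all of [0,1]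
      have hconc := Fk_concave_part hP hQ hQP le_rfl hG0 hG1
      have key := hconc.2 (Set.left_mem_Icc.2 zero_le_one) (Set.right_mem_Icc.2 zero_le_one)
        (by linarith : (0:ℝ) ≤ 1 - l) hl0 (by ring)
      simp only [smul_eq_mul, Fk_zero, Fk_one, mul_zero, mul_one, add_zero, zero_add] at key
      simpa using key
    · -- split point c
      have h2 : 2 ≤ P + Q := by unfold Gk at hG0; linarith
      have hlpos : 0 < l := by
        rcases eq_or_lt_of_le hl0 with rfl | h
        · exact absurd hGl (not_lt.2 hG0.le)
        · exact h
      have hs : 2 * (P * Q - P - Q + 1) < 0 := by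
        have e : l * (2 * (P * Q - P - Q + 1)) = Gk P Q l - Gk P Q 0 := by unfold Gk; ring
        nlinarith
      obtain ⟨c, hGc, hc0, hcl⟩ : ∃ c, Gk P Q c = 0 ∧ 0 ≤ c ∧ c ≤ l := by
        refine ⟨(2 - P - Q) / (2 * (P * Q - P - Q + 1)), ?_, ?_, ?_⟩
        · unfold Gk
          rw [div_mul_cancel₀ _ hs.ne]
          ring
        · rw [div_nonneg_iff]
          right
          exact ⟨by unfold Gk at hG0; linarith, hs.le⟩
        · by_contra hcon
          push_neg at hcon
          have e : (l - (2 - P - Q) / (2 * (P * Q - P - Q + 1))) * (2 * (P * Q - P - Q + 1))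
              = Gk P Q l - Gk P Q ((2 - P - Q) / (2 * (P * Q - P - Q + 1))) := by
            unfold Gk; ring
          have hGc' : Gk P Q ((2 - P - Q) / (2 * (P * Q - P - Q + 1))) = 0 := by
            unfold Gk
            rw [div_mul_cancel₀ _ hs.ne]
            ring
          rw [hGc'] at e
          nlinarith [mul_nonneg_of_nonpos_of_nonpos (by linarith :
            l - (2 - P - Q) / (2 * (P * Q - P - Q + 1)) ≤ 0) hs.le]
      have hFc : 0 ≤ Fk P Q c :=
        Fk_mono_part hP hQ hQP (hL h2) h2 hc0 (le_trans hcl hl1) (le_of_eq hGc.symm)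
      rcases eq_or_lt_of_le (le_trans hcl hl1) with hceq | hc1
      · -- c = 1, so l = 1
        have : l = 1 := le_antisymm hl1 (by rw [hceq] at hcl; exact hcl)
        rw [this, Fk_one]
      · have hconc := Fk_concave_part hP hQ hQP hc0 (le_of_eq hGc) hG1
        have hd : (0:ℝ) < 1 - c := by linarith
        have ha : (0:ℝ) ≤ (1 - l) / (1 - c) := by
          apply div_nonneg (by linarith) hd.le
        have hb : (0:ℝ) ≤ (l - c) / (1 - c) := by
          apply div_nonneg (by linarith) hd.le
        have hab : (1 - l) / (1 - c) + (l - c) / (1 - c) = 1 := by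
          field_simp
          ring
        have key := hconc.2 (Set.mem_Icc.2 ⟨le_rfl, hc1.le⟩)
          (Set.mem_Icc.2 ⟨hc1.le, le_rfl⟩) ha hb hab
        have hne : (1:ℝ) - c ≠ 0 := hd.ne'
        have hpt : ((1 - l) / (1 - c)) • c + ((l - c) / (1 - c)) • (1:ℝ) = l := by
          simp only [smul_eq_mul]
          field_simp
          ring
        rw [hpt, Fk_one] at key
        simp only [smul_eq_mul, mul_zero, add_zero] at key
        calc (0:ℝ) ≤ (1 - l) / (1 - c) * Fk P Q c := mul_nonneg ha hFc
        _ ≤ Fk P Q l := key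


lemma coreNonneg {lam u₁ u₂ u₃ : ℝ} (hl0 : 0 ≤ lam) (hl1 : lam ≤ 1)
    (b1 : -1 < u₁) (b1' : u₁ < 1) (b2 : -1 < u₂) (b2' : u₂ < 1)
    (b3 : -1 < u₃) (b3' : u₃ < 1)
    (hN : 0 ≤ u₁ + u₂ + u₃ + u₁ * u₂ * u₃) :
    artanh (lam * (u₁ + u₂ + u₃ + u₁ * u₂ * u₃) / (1 + lam * (u₁ * u₂ + u₂ * u₃ + u₃ * u₁)))
      ≤ lam * (artanh u₁ + artanh u₂ + artanh u₃) := by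
  obtain ⟨P, hPdef⟩ : ∃ x : ℝ, x = (1 + u₁) * ((1 + u₂) * (1 + u₃)) := ⟨_, rfl⟩
  obtain ⟨Q, hQdef⟩ : ∃ x : ℝ, x = (1 - u₁) * ((1 - u₂) * (1 - u₃)) := ⟨_, rfl⟩
  have hP : 0 < P := by
    rw [hPdef]; exact mul_pos (by linarith) (mul_pos (by linarith) (by linarith))
  have hQ : 0 < Q := by
    rw [hQdef]; exact mul_pos (by linarith) (mul_pos (by linarith) (by linarith))
  have hPQN : P - Q = 2 * (u₁ + u₂ + u₃ + u₁ * u₂ * u₃) := by rw [hPdef, hQdef]; ring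
  have hQP : Q ≤ P := by linarith
  have hPQ1 : P * Q ≤ 1 := by
    have e : P * Q = (1 - u₁ ^ 2) * ((1 - u₂ ^ 2) * (1 - u₃ ^ 2)) := by rw [hPdef, hQdef]; ring
    rw [e]
    exact mul_le_one₀ (by nlinarith) (mul_nonneg (by nlinarith) (by nlinarith))
      (mul_le_one₀ (by nlinarith) (by nlinarith) (by nlinarith))
  have hApos : 0 < 1 - lam + lam * P := by
    have := affpos hP hl0 hl1; linarith [this]
  have hBpos : 0 < 1 - lam + lam * Q := by
    have := affpos hQ hl0 hl1; linarith [this]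
  have hsig : P + Q - 2 = 2 * (u₁ * u₂ + u₂ * u₃ + u₃ * u₁) := by rw [hPdef, hQdef]; ring
  have hDpos : 0 < 1 + lam * (u₁ * u₂ + u₂ * u₃ + u₃ * u₁) := by
    rcases eq_or_lt_of_le hl1 with rfl | hlt
    · nlinarith
    · have h1 : 0 ≤ lam * (P + Q) := mul_nonneg hl0 (by linarith)
      nlinarith
  have hDval1 : (1 + lam * (u₁ * u₂ + u₂ * u₃ + u₃ * u₁)) + lam * (u₁ + u₂ + u₃ + u₁ * u₂ * u₃)
      = 1 - lam + lam * P := by linear_combination (-(lam / 2)) * hsig + (-(lam / 2)) * hPQN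
  have hDval2 : (1 + lam * (u₁ * u₂ + u₂ * u₃ + u₃ * u₁)) - lam * (u₁ + u₂ + u₃ + u₁ * u₂ * u₃)
      = 1 - lam + lam * Q := by linear_combination (-(lam / 2)) * hsig + (lam / 2) * hPQN
  have hNum : 1 + lam * (u₁ + u₂ + u₃ + u₁ * u₂ * u₃) /
      (1 + lam * (u₁ * u₂ + u₂ * u₃ + u₃ * u₁))
      = (1 - lam + lam * P) / (1 + lam * (u₁ * u₂ + u₂ * u₃ + u₃ * u₁)) := by
    rw [← hDval1, add_div, div_self hDpos.ne']
  have hDen : 1 - lam * (u₁ + u₂ + u₃ + u₁ * u₂ * u₃) /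
      (1 + lam * (u₁ * u₂ + u₂ * u₃ + u₃ * u₁))
      = (1 - lam + lam * Q) / (1 + lam * (u₁ * u₂ + u₂ * u₃ + u₃ * u₁)) := by
    rw [← hDval2, sub_div, div_self hDpos.ne']
  have e1 : artanh (lam * (u₁ + u₂ + u₃ + u₁ * u₂ * u₃) /
      (1 + lam * (u₁ * u₂ + u₂ * u₃ + u₃ * u₁)))
      = (1 / 2) * (Real.log (1 - lam + lam * P) - Real.log (1 - lam + lam * Q)) := by
    unfold artanh
    rw [show (1 : ℝ) + lam * (u₁ + u₂ + u₃ + u₁ * u₂ * u₃) /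
        (1 + lam * (u₁ * u₂ + u₂ * u₃ + u₃ * u₁)) = _ from hNum,
      show (1 : ℝ) - lam * (u₁ + u₂ + u₃ + u₁ * u₂ * u₃) /
        (1 + lam * (u₁ * u₂ + u₂ * u₃ + u₃ * u₁)) = _ from hDen]
    rw [Real.log_div (ne_of_gt (div_pos hApos hDpos)) (ne_of_gt (div_pos hBpos hDpos)),
      Real.log_div hApos.ne' hDpos.ne', Real.log_div hBpos.ne' hDpos.ne']
    ring
  have e2 : artanh u₁ + artanh u₂ + artanh u₃ = (1 / 2) * (Real.log P - Real.log Q) := by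
    rw [artanh_eq b1 b1', artanh_eq b2 b2', artanh_eq b3 b3', hPdef, hQdef]
    rw [Real.log_mul (ne_of_gt (by linarith : (0:ℝ) < 1 + u₁))
        (ne_of_gt (mul_pos (by linarith : (0:ℝ) < 1 + u₂) (by linarith : (0:ℝ) < 1 + u₃))),
      Real.log_mul (ne_of_gt (by linarith : (0:ℝ) < 1 + u₂))
        (ne_of_gt (by linarith : (0:ℝ) < 1 + u₃)),
      Real.log_mul (ne_of_gt (by linarith : (0:ℝ) < 1 - u₁))
        (ne_of_gt (mul_pos (by linarith : (0:ℝ) < 1 - u₂) (by linarith : (0:ℝ) < 1 - u₃))),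
      Real.log_mul (ne_of_gt (by linarith : (0:ℝ) < 1 - u₂))
        (ne_of_gt (by linarith : (0:ℝ) < 1 - u₃))]
    ring
  have hL : 2 ≤ P + Q → P - Q ≤ Real.log P - Real.log Q := by
    intro h2
    have hsigma : 0 ≤ u₁ * u₂ + u₂ * u₃ + u₃ * u₁ := by linarith [hsig]
    have hcs := claimstar b1 b1' b2 b2' b3 b3' hsigma hN
    rw [e2] at hcs
    linarith [hPQN]
  have hkey := keyPQ hQ hQP hPQ1 hL hl0 hl1
  unfold Fk at hkey
  rw [show (1 : ℝ) + lam * (P - 1) = 1 - lam + lam * P by ring,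
    show (1 : ℝ) + lam * (Q - 1) = 1 - lam + lam * Q by ring] at hkey
  rw [e1, e2]
  linarith

lemma core {lam u₁ u₂ u₃ : ℝ} (hl0 : 0 ≤ lam) (hl1 : lam ≤ 1)
    (b1 : -1 < u₁) (b1' : u₁ < 1) (b2 : -1 < u₂) (b2' : u₂ < 1)
    (b3 : -1 < u₃) (b3' : u₃ < 1) :
    (u₁ + u₂ + u₃ + u₁ * u₂ * u₃) *
      artanh (lam * (u₁ + u₂ + u₃ + u₁ * u₂ * u₃) / (1 + lam * (u₁ * u₂ + u₂ * u₃ + u₃ * u₁)))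
    ≤ lam * (u₁ + u₂ + u₃ + u₁ * u₂ * u₃) * (artanh u₁ + artanh u₂ + artanh u₃) := by
  rcases le_or_gt 0 (u₁ + u₂ + u₃ + u₁ * u₂ * u₃) with hN | hN
  · have h := coreNonneg hl0 hl1 b1 b1' b2 b2' b3 b3' hN
    nlinarith [mul_le_mul_of_nonneg_left h hN]
  · have hN' : 0 ≤ -u₁ + -u₂ + -u₃ + -u₁ * -u₂ * -u₃ := by nlinarith
    have h := coreNonneg hl0 hl1 (by linarith : (-1:ℝ) < -u₁) (by linarith : -u₁ < 1)
      (by linarith : (-1:ℝ) < -u₂) (by linarith : -u₂ < 1)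
      (by linarith : (-1:ℝ) < -u₃) (by linarith : -u₃ < 1) hN'
    rw [show -u₁ + -u₂ + -u₃ + -u₁ * -u₂ * -u₃ = -(u₁ + u₂ + u₃ + u₁ * u₂ * u₃) by ring,
      show -u₁ * -u₂ + -u₂ * -u₃ + -u₃ * -u₁ = u₁ * u₂ + u₂ * u₃ + u₃ * u₁ by ring,
      show lam * -(u₁ + u₂ + u₃ + u₁ * u₂ * u₃) /
          (1 + lam * (u₁ * u₂ + u₂ * u₃ + u₃ * u₁))
        = -(lam * (u₁ + u₂ + u₃ + u₁ * u₂ * u₃) /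
          (1 + lam * (u₁ * u₂ + u₂ * u₃ + u₃ * u₁))) by ring,
      artanh_neg, artanh_neg, artanh_neg, artanh_neg] at h
    have h2 : lam * (artanh u₁ + artanh u₂ + artanh u₃) ≤
        artanh (lam * (u₁ + u₂ + u₃ + u₁ * u₂ * u₃) /
          (1 + lam * (u₁ * u₂ + u₂ * u₃ + u₃ * u₁))) := by linarith
    nlinarith [mul_le_mul_of_nonpos_left h2 hN.le]




/-- Lemma B.4 (Marwaha): the key inequality for the SKL multi-terminal contraction
coefficient for `r = 4`. For `λ ∈ [0,1]` and `θ₁, θ₂, θ₃ ∈ [0,1)`,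
`¼·Σ_{s₂,s₃∈{−1,1}} N(s₂,s₃)·artanh(λ·N(s₂,s₃)/D(s₂,s₃))
  ≤ λ·(θ₁·artanh θ₁ + θ₂·artanh θ₂ + θ₃·artanh θ₃)`. -/
theorem stmt4 (lam θ₁ θ₂ θ₃ : ℝ) (hlam : lam ∈ Set.Icc (0 : ℝ) 1)
    (hθ₁ : θ₁ ∈ Set.Ico (0 : ℝ) 1) (hθ₂ : θ₂ ∈ Set.Ico (0 : ℝ) 1)
    (hθ₃ : θ₃ ∈ Set.Ico (0 : ℝ) 1) :
    (1 / 4) * ∑ s₂ ∈ ({-1, 1} : Finset ℝ), ∑ s₃ ∈ ({-1, 1} : Finset ℝ),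
        N θ₁ θ₂ θ₃ s₂ s₃ * artanh (lam * N θ₁ θ₂ θ₃ s₂ s₃ / D lam θ₁ θ₂ θ₃ s₂ s₃)
      ≤ lam * (θ₁ * artanh θ₁ + θ₂ * artanh θ₂ + θ₃ * artanh θ₃) := by
  obtain ⟨hl0, hl1⟩ := hlam
  obtain ⟨h10, h11⟩ := hθ₁
  obtain ⟨h20, h21⟩ := hθ₂
  obtain ⟨h30, h31⟩ := hθ₃
  have b1 : (-1:ℝ) < θ₁ := by linarith
  have b2 : (-1:ℝ) < θ₂ := by linarith
  have b3 : (-1:ℝ) < θ₃ := by linarith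
  have b1n : (-1:ℝ) < -θ₁ := by linarith
  have hpp := core hl0 hl1 b1 h11 b2 h21 b3 h31
  rw [show θ₁ + θ₂ + θ₃ + θ₁ * θ₂ * θ₃ = N θ₁ θ₂ θ₃ 1 1 by unfold N; ring,
    show (1:ℝ) + lam * (θ₁ * θ₂ + θ₂ * θ₃ + θ₃ * θ₁) = D lam θ₁ θ₂ θ₃ 1 1 by
      unfold D; ring] at hpp
  have hpm := core hl0 hl1 b1 h11 b2 h21 (by linarith : (-1:ℝ) < -θ₃) (by linarith : -θ₃ < 1)
  rw [show θ₁ + θ₂ + -θ₃ + θ₁ * θ₂ * -θ₃ = N θ₁ θ₂ θ₃ 1 (-1) by unfold N; ring,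
    show (1:ℝ) + lam * (θ₁ * θ₂ + θ₂ * -θ₃ + -θ₃ * θ₁) = D lam θ₁ θ₂ θ₃ 1 (-1) by
      unfold D; ring, artanh_neg θ₃] at hpm
  have hmp := core hl0 hl1 b1 h11 (by linarith : (-1:ℝ) < -θ₂) (by linarith : -θ₂ < 1) b3 h31
  rw [show θ₁ + -θ₂ + θ₃ + θ₁ * -θ₂ * θ₃ = N θ₁ θ₂ θ₃ (-1) 1 by unfold N; ring,
    show (1:ℝ) + lam * (θ₁ * -θ₂ + -θ₂ * θ₃ + θ₃ * θ₁) = D lam θ₁ θ₂ θ₃ (-1) 1 by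
      unfold D; ring, artanh_neg θ₂] at hmp
  have hmm := core hl0 hl1 b1 h11 (by linarith : (-1:ℝ) < -θ₂) (by linarith : -θ₂ < 1)
    (by linarith : (-1:ℝ) < -θ₃) (by linarith : -θ₃ < 1)
  rw [show θ₁ + -θ₂ + -θ₃ + θ₁ * -θ₂ * -θ₃ = N θ₁ θ₂ θ₃ (-1) (-1) by unfold N; ring,
    show (1:ℝ) + lam * (θ₁ * -θ₂ + -θ₂ * -θ₃ + -θ₃ * θ₁) = D lam θ₁ θ₂ θ₃ (-1) (-1) by
      unfold D; ring, artanh_neg θ₂, artanh_neg θ₃] at hmm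
  have hsum : lam * N θ₁ θ₂ θ₃ (-1) (-1) * (artanh θ₁ + -artanh θ₂ + -artanh θ₃)
      + lam * N θ₁ θ₂ θ₃ (-1) 1 * (artanh θ₁ + -artanh θ₂ + artanh θ₃)
      + lam * N θ₁ θ₂ θ₃ 1 (-1) * (artanh θ₁ + artanh θ₂ + -artanh θ₃)
      + lam * N θ₁ θ₂ θ₃ 1 1 * (artanh θ₁ + artanh θ₂ + artanh θ₃)
      = 4 * (lam * (θ₁ * artanh θ₁ + θ₂ * artanh θ₂ + θ₃ * artanh θ₃)) := by
    simp only [N]; ring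
  rw [Finset.sum_pair (by norm_num : (-1:ℝ) ≠ 1)]
  rw [Finset.sum_pair (by norm_num : (-1:ℝ) ≠ 1), Finset.sum_pair (by norm_num : (-1:ℝ) ≠ 1)]
  linarith [hpp, hpm, hmp, hmm, hsum]
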